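/- For every prime p > 3, the sum ∑_{k=0}^{p-1} C(p+k, k+1)·C(p+k, k)·C(p-1, k)^2 is congruent to 1 modulo 2p^3. -/

import Mathlib

open Nat Finset

lemma lucas2 (n k : ℕ) : n.choose k ≡ (n % 2).choose (k % 2) * (n / 2).choose (k / 2) [MOD 2] :=
  Choose.choose_modEq_choose_mod_mul_choose_div_nat (p := 2)

lemma Qpar : ∀ j q : ℕ, 1 ≤ j → 2 ∣ (q.choose j) * ((q + j).choose j) := by
  intro j
  induction j using Nat.strong_induction_on with
  | _ j IH =>
    intro q hj
    rcases Nat.even_or_odd j with hje | hjo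
    · -- j even, j ≥ 2
      have hj0 : j % 2 = 0 := Nat.even_iff.mp hje
      have h2 : j / 2 < j := Nat.div_lt_self (by omega) one_lt_two
      have h1 : 1 ≤ j / 2 := by omega
      have e1 : (q + j) / 2 = q / 2 + j / 2 := by omega
      have e2 : (q + j) % 2 = q % 2 := by omega
      have hq := lucas2 q j
      have hqj := lucas2 (q + j) j
      rw [hj0] at hq hqj
      rw [e1, e2] at hqj
      have hmod : q.choose j * ((q + j).choose j) ≡
          ((q % 2).choose 0 * (q / 2).choose (j / 2)) *
          ((q % 2).choose 0 * ((q / 2 + j / 2)).choose (j / 2)) [MOD 2] := Nat.ModEq.mul hq hqj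
      have : (2:ℕ) ∣ ((q % 2).choose 0 * (q / 2).choose (j / 2)) *
          ((q % 2).choose 0 * ((q / 2 + j / 2)).choose (j / 2)) := by
        simp only [Nat.choose_zero_right, one_mul]
        exact IH (j / 2) h2 (q / 2) h1
      exact (Nat.modEq_zero_iff_dvd).mp (hmod.trans ((Nat.modEq_zero_iff_dvd).mpr this))
    · -- j odd
      have hj1 : j % 2 = 1 := Nat.odd_iff.mp hjo
      rcases Nat.even_or_odd q with hqe | hqo
      · -- q even: choose q j even
        have hq := lucas2 q j
        rw [Nat.even_iff.mp hqe, hj1] at hq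
        simp only [Nat.choose_eq_zero_of_lt (by norm_num : 0 < 1), zero_mul] at hq
        exact Dvd.dvd.mul_right ((Nat.modEq_zero_iff_dvd).mp hq) _
      · -- q odd: q + j even
        have hq1 : q % 2 = 1 := Nat.odd_iff.mp hqo
        have hq := lucas2 (q + j) j
        have e : (q + j) % 2 = 0 := by omega
        rw [e, hj1] at hq
        simp only [Nat.choose_eq_zero_of_lt (by norm_num : 0 < 1), zero_mul] at hq
        exact Dvd.dvd.mul_left ((Nat.modEq_zero_iff_dvd).mp hq) _

lemma Rpar (p m : ℕ) (hp : Odd p) (hm : 1 ≤ m) : 2 ∣ (p - 1).choose m * ((p + m).choose m) := by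
  have hp1 : p % 2 = 1 := Nat.odd_iff.mp hp
  rcases Nat.even_or_odd m with hme | hmo
  · have hm0 : m % 2 = 0 := Nat.even_iff.mp hme
    have h1 : 1 ≤ m / 2 := by omega
    have e1 : (p + m) / 2 = (p - 1) / 2 + m / 2 := by omega
    have e2 : (p + m) % 2 = 1 := by omega
    have e3 : (p - 1) % 2 = 0 := by omega
    have hq := lucas2 (p - 1) m
    have hqj := lucas2 (p + m) m
    rw [e3, hm0] at hq
    rw [e1, e2, hm0] at hqj
    have hmod : (p - 1).choose m * ((p + m).choose m) ≡
        (Nat.choose 0 0 * ((p - 1) / 2).choose (m / 2)) *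
        (Nat.choose 1 0 * (((p - 1) / 2 + m / 2)).choose (m / 2)) [MOD 2] := Nat.ModEq.mul hq hqj
    have : (2:ℕ) ∣ (Nat.choose 0 0 * ((p - 1) / 2).choose (m / 2)) *
        (Nat.choose 1 0 * (((p - 1) / 2 + m / 2)).choose (m / 2)) := by
      simpa using Qpar (m / 2) ((p - 1) / 2) h1
    exact (Nat.modEq_zero_iff_dvd).mp (hmod.trans ((Nat.modEq_zero_iff_dvd).mpr this))
  · have hq := lucas2 (p - 1) m
    have e3 : (p - 1) % 2 = 0 := by omega
    rw [e3, Nat.odd_iff.mp hmo] at hq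
    simp only [Nat.choose_eq_zero_of_lt (by norm_num : 0 < 1), zero_mul] at hq
    exact Dvd.dvd.mul_right ((Nat.modEq_zero_iff_dvd).mp hq) _


lemma L1 (p k : ℕ) :
    (k + 1) * ((p + k).choose (k + 1) * (p + k).choose k * ((p - 1).choose k) ^ 2) =
      p * ((p + k).choose k * (p - 1).choose k) ^ 2 := by
  have h : (p + k).choose (k + 1) * (k + 1) = (p + k).choose k * p := by
    rw [Nat.choose_succ_right_eq]; congr 1; omega
  calc (k + 1) * ((p + k).choose (k + 1) * (p + k).choose k * ((p - 1).choose k) ^ 2)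
      = ((p + k).choose (k + 1) * (k + 1)) * ((p + k).choose k * ((p - 1).choose k) ^ 2) := by ring
    _ = ((p + k).choose k * p) * ((p + k).choose k * ((p - 1).choose k) ^ 2) := by rw [h]
    _ = p * ((p + k).choose k * (p - 1).choose k) ^ 2 := by ring

lemma natprod (p k : ℕ) :
    ((p + k).choose k * (p - 1).choose k) * (k ! * k !) =
      (p + 1).ascFactorial k * (p - 1).descFactorial k := by
  rw [Nat.ascFactorial_eq_factorial_mul_choose, Nat.descFactorial_eq_factorial_mul_choose]
  ring

lemma prodcast (p : ℕ) (R : Type) [CommRing R] (hp2 : (p : R) ^ 2 = 0) :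
    ∀ k, k ≤ p - 1 →
      (((p + 1).ascFactorial k : ℕ) : R) * (((p - 1).descFactorial k : ℕ) : R) =
        ∏ i ∈ range k, (-((i : R) + 1) ^ 2) := by
  intro k
  induction k with
  | zero => simp
  | succ k IH =>
    intro hk
    have hk' : k ≤ p - 1 := by omega
    have hc1 : ((p - 1 - k : ℕ) : R) = (p : R) - ((k : R) + 1) := by
      have h1 : p - 1 - k + (k + 1) = p := by omega
      have := congrArg (fun n : ℕ => (n : R)) h1
      push_cast at this
      linear_combination this
    rw [Nat.ascFactorial_succ, Nat.descFactorial_succ, prod_range_succ]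
    push_cast [hc1]
    calc ((p:R) + 1 + k) * ↑((p + 1).ascFactorial k) * (((p:R) - (k + 1)) * ↑((p - 1).descFactorial k))
        = (((p:R) + (k + 1)) * ((p:R) - ((k:R) + 1))) *
            (↑((p + 1).ascFactorial k) * ↑((p - 1).descFactorial k)) := by ring
      _ = (-(((k:R)) + 1) ^ 2) * ∏ i ∈ range k, (-((i : R) + 1) ^ 2) := by
            rw [IH hk']; congr 1; linear_combination hp2
      _ = (∏ i ∈ range k, (-((i : R) + 1) ^ 2)) * (-((k:R) + 1) ^ 2) := by ring

lemma factcast (R : Type) [CommRing R] (k : ℕ) : ((k ! : ℕ) : R) = ∏ i ∈ range k, ((i : R) + 1) := by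
  rw [← Finset.prod_range_add_one_eq_factorial]
  push_cast
  rfl

lemma L2 (p : ℕ) (hp : p.Prime) (k : ℕ) (hk : k ≤ p - 1) :
    (((p + k).choose k * (p - 1).choose k : ℕ) : ZMod (p ^ 2)) = (-1) ^ k := by
  have hp2 : ((p : ZMod (p ^ 2))) ^ 2 = 0 := by
    rw [← Nat.cast_pow, ZMod.natCast_self]
  have h1 := congrArg (fun n : ℕ => (n : ZMod (p ^ 2))) (natprod p k)
  simp only [Nat.cast_mul] at h1
  rw [prodcast p (ZMod (p ^ 2)) hp2 k hk] at h1
  have h2 : (∏ i ∈ range k, (-((i : ZMod (p ^ 2)) + 1) ^ 2)) =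
      (-1) ^ k * (((k ! : ℕ) : ZMod (p ^ 2)) * ((k ! : ℕ) : ZMod (p ^ 2))) := by
    calc (∏ i ∈ range k, (-((i : ZMod (p ^ 2)) + 1) ^ 2))
        = ∏ i ∈ range k, ((-1) * (((i : ZMod (p ^ 2)) + 1) * ((i : ZMod (p ^ 2)) + 1))) :=
          prod_congr rfl (fun i _ => by ring)
      _ = (∏ _i ∈ range k, (-1 : ZMod (p ^ 2))) *
            ∏ i ∈ range k, (((i : ZMod (p ^ 2)) + 1) * ((i : ZMod (p ^ 2)) + 1)) :=
          prod_mul_distrib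
      _ = (-1) ^ k * ((∏ i ∈ range k, ((i : ZMod (p ^ 2)) + 1)) *
            ∏ i ∈ range k, ((i : ZMod (p ^ 2)) + 1)) := by rw [prod_const, card_range, prod_mul_distrib]
      _ = (-1) ^ k * (((k ! : ℕ) : ZMod (p ^ 2)) * ((k ! : ℕ) : ZMod (p ^ 2))) := by
          rw [factcast]
  rw [h2] at h1
  have hcop : Nat.Coprime (k !) (p ^ 2) := by
    apply Nat.Coprime.pow_right
    rcases (Nat.coprime_or_dvd_of_prime hp (k !)) with h | h
    · exact h.symm
    · exfalso
      have h2 := (Nat.Prime.dvd_factorial hp).mp h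
      have := hp.two_le
      omega
  have hunit : IsUnit (((k ! : ℕ) : ZMod (p ^ 2)) * ((k ! : ℕ) : ZMod (p ^ 2))) :=
    ((ZMod.isUnit_iff_coprime (k !) (p ^ 2)).mpr hcop).mul
      ((ZMod.isUnit_iff_coprime (k !) (p ^ 2)).mpr hcop)
  exact hunit.mul_left_cancel (by push_cast; linear_combination h1)

lemma L3 (p : ℕ) (hp : p.Prime) (k : ℕ) (hk : k ≤ p - 1) :
    (p : ℤ) ^ 2 ∣ (((p + k).choose k * (p - 1).choose k : ℕ) : ℤ) ^ 2 - 1 := by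
  have h := L2 p hp k hk
  have h2 : ((((((p + k).choose k * (p - 1).choose k : ℕ) : ℤ) ^ 2 - 1 : ℤ)) : ZMod (p ^ 2)) = 0 := by
    push_cast
    push_cast at h
    rw [h, ← pow_mul, mul_comm k 2, pow_mul]
    norm_num
  have := (ZMod.intCast_zmod_eq_zero_iff_dvd _ (p ^ 2)).mp h2
  push_cast at this
  exact_mod_cast this

lemma L4 (p : ℕ) (hp : p.Prime) (k : ℕ) (hk : k ≤ p - 1) :
    ((k + 1 : ℕ) : ZMod (p ^ 3)) *
      (((p + k).choose (k + 1) * (p + k).choose k * ((p - 1).choose k) ^ 2 : ℕ) : ZMod (p ^ 3)) =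
      (p : ZMod (p ^ 3)) := by
  obtain ⟨c, hc⟩ := L3 p hp k hk
  push_cast at hc
  have h1 := congrArg (fun n : ℕ => (n : ℤ)) (L1 p k)
  push_cast at h1
  have hdvd : ((p ^ 3 : ℕ) : ℤ) ∣
      (((k + 1) * ((p + k).choose (k + 1) * (p + k).choose k * ((p - 1).choose k) ^ 2) : ℕ) : ℤ)
        - (p : ℤ) := by
    refine ⟨c, ?_⟩
    push_cast
    linear_combination h1 + (p : ℤ) * hc
  have key : (((k + 1) * ((p + k).choose (k + 1) * (p + k).choose k * ((p - 1).choose k) ^ 2) : ℕ) : ℤ)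
      ≡ (p : ℤ) [ZMOD (p ^ 3 : ℕ)] := (Int.modEq_iff_dvd.mpr hdvd).symm
  have h2 := (ZMod.intCast_eq_intCast_iff _ _ _).mpr key
  push_cast at h2 ⊢
  linear_combination h2

lemma unit_lemma (p : ℕ) (hp : p.Prime) (m a : ℕ) (ha0 : 0 < a) (hap : a < p) :
    IsUnit ((a : ℕ) : ZMod (p ^ m)) := by
  rw [ZMod.isUnit_iff_coprime]
  apply Nat.Coprime.pow_right
  rcases Nat.coprime_or_dvd_of_prime hp a with h | h
  · exact h.symm
  · exact absurd (Nat.le_of_dvd ha0 h) (by omega)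

lemma ker_lemma (p : ℕ) (hp : 0 < p) (x : ZMod (p ^ 3))
    (hx : (ZMod.castHom (dvd_pow_self p (by norm_num : (3:ℕ) ≠ 0)) (ZMod p)) x = 0) :
    (p : ZMod (p ^ 3)) ^ 2 * x = 0 := by
  haveI : NeZero (p ^ 3) := ⟨by positivity⟩
  have hval : ((x.val : ℕ) : ZMod (p ^ 3)) = x := ZMod.natCast_rightInverse x
  have hx2 : ((x.val : ℕ) : ZMod p) = 0 := by
    rw [← hx, ← hval]
    simp
  obtain ⟨t, ht⟩ := (ZMod.natCast_eq_zero_iff _ _).mp hx2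
  calc (p : ZMod (p ^ 3)) ^ 2 * x = (p : ZMod (p ^ 3)) ^ 2 * ((x.val : ℕ) : ZMod (p ^ 3)) := by
        rw [hval]
    _ = ((p ^ 2 * (p * t) : ℕ) : ZMod (p ^ 3)) := by rw [← ht]; push_cast; ring
    _ = ((p ^ 3 : ℕ) : ZMod (p ^ 3)) * (t : ZMod (p ^ 3)) := by push_cast; ring
    _ = 0 := by rw [ZMod.natCast_self, zero_mul]

lemma prod_one_sub (p : ℕ) (hp : 0 < p) (c : ℕ → ZMod (p ^ 3)) (s : Finset ℕ) :
    (∏ j ∈ s, (1 - (p : ZMod (p ^ 3)) ^ 2 * c j)) = 1 - (p : ZMod (p ^ 3)) ^ 2 * ∑ j ∈ s, c j := by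
  classical
  induction s using Finset.induction with
  | empty => simp
  | insert a s hj IH =>
    rw [Finset.prod_insert hj, Finset.sum_insert hj, IH]
    have hp4 : (p : ZMod (p ^ 3)) ^ 2 * (p : ZMod (p ^ 3)) ^ 2 = 0 := by
      have : ((p ^ 3 : ℕ) : ZMod (p ^ 3)) = 0 := ZMod.natCast_self _
      push_cast at this
      calc (p : ZMod (p ^ 3)) ^ 2 * (p : ZMod (p ^ 3)) ^ 2
          = (p : ZMod (p ^ 3)) ^ 3 * (p : ZMod (p ^ 3)) := by ring
        _ = 0 := by rw [this, zero_mul]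
    linear_combination (c a * ((∑ j ∈ s, c j)) ) * hp4

lemma sum_range_to_univ (p : ℕ) [NeZero p] (f : ZMod p → ZMod p) :
    ∑ j ∈ range p, f ((j : ℕ) : ZMod p) = ∑ x : ZMod p, f x := by
  apply Finset.sum_nbij' (fun i => ((i : ℕ) : ZMod p)) (fun x => x.val)
  · intro a _; exact Finset.mem_univ _
  · intro x _; exact Finset.mem_range.mpr (ZMod.val_lt x)
  · intro a ha; exact ZMod.val_natCast_of_lt (Finset.mem_range.mp ha)
  · intro x _; exact ZMod.natCast_rightInverse x
  · intro a _; rfl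

lemma SQ (p : ℕ) (hp : p.Prime) (hp3 : 3 < p) :
    ∑ j ∈ range (p - 1), ((((j + 1 : ℕ) : ZMod p)) ^ 2)⁻¹ = 0 := by
  haveI : Fact p.Prime := ⟨hp⟩
  have h0 : ∑ j ∈ range ((p - 1) + 1), ((((j : ℕ) : ZMod p)) ^ 2)⁻¹ =
      (∑ j ∈ range (p - 1), ((((j + 1 : ℕ) : ZMod p)) ^ 2)⁻¹) + ((((0 : ℕ) : ZMod p)) ^ 2)⁻¹ :=
    Finset.sum_range_succ' _ _
  have hps : (p - 1) + 1 = p := by omega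
  rw [hps] at h0
  norm_num at h0
  push_cast
  rw [← h0, sum_range_to_univ p (fun x => (x ^ 2)⁻¹)]
  have h1 : ∑ x : ZMod p, ((x ^ 2)⁻¹) = ∑ x : ZMod p, (x⁻¹) ^ 2 := by
    apply Finset.sum_congr rfl; intro x _; rw [inv_pow]
  have e : Function.Involutive (fun x : ZMod p => x⁻¹) := fun x => inv_inv x
  have h2 : ∑ x : ZMod p, ((x⁻¹) ^ 2) = ∑ x : ZMod p, x ^ 2 :=
    Equiv.sum_comp (Function.Involutive.toPerm _ e) (fun x => x ^ 2)
  rw [h1, h2]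
  have := FiniteField.sum_pow_lt_card_sub_one (ZMod p) 2 (by rw [ZMod.card]; omega)
  exact this

lemma inv_cast (p m : ℕ) (hm : p ∣ m) [NeZero m] [Fact p.Prime] (x : ZMod m) (hx : IsUnit x) :
    (ZMod.castHom hm (ZMod p)) x⁻¹ = ((ZMod.castHom hm (ZMod p)) x)⁻¹ := by
  have h1 : x * x⁻¹ = 1 := ZMod.mul_inv_of_unit x hx
  have h2 : (ZMod.castHom hm (ZMod p)) x * (ZMod.castHom hm (ZMod p)) x⁻¹ = 1 := by
    rw [← map_mul, h1, map_one]
  exact (inv_eq_of_mul_eq_one_right h2).symm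

lemma L9 (p : ℕ) (hp : p.Prime) (hp3 : 3 < p) :
    (p : ZMod (p ^ 3)) * ∑ j ∈ range (p - 1), (((j + 1 : ℕ) : ZMod (p ^ 3)))⁻¹ = 0 := by
  haveI : Fact p.Prime := ⟨hp⟩
  haveI : NeZero (p ^ 3) := ⟨by positivity⟩
  set R := ZMod (p ^ 3)
  set H := ∑ j ∈ range (p - 1), (((j + 1 : ℕ) : R))⁻¹ with hH
  -- reflection
  have hrefl : ∑ j ∈ range (p - 1), (((p - 1 - j : ℕ) : R))⁻¹ = H := by
    rw [hH]
    have hr := Finset.sum_range_reflect (fun j => (((j + 1 : ℕ) : R))⁻¹) (p - 1)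
    rw [← hr]
    apply Finset.sum_congr rfl
    intro j hj
    have hj' : j < p - 1 := Finset.mem_range.mp hj
    congr 2
    omega
  -- pairing
  have hpair : ∀ j ∈ range (p - 1),
      (((j + 1 : ℕ) : R))⁻¹ + (((p - 1 - j : ℕ) : R))⁻¹ =
        (p : R) * ((((j + 1) * (p - 1 - j) : ℕ) : R))⁻¹ := by
    intro j hj
    have hj' : j < p - 1 := Finset.mem_range.mp hj
    have hua : IsUnit ((j + 1 : ℕ) : R) := unit_lemma p hp 3 (j + 1) (by omega) (by omega)
    have hub : IsUnit ((p - 1 - j : ℕ) : R) := unit_lemma p hp 3 (p - 1 - j) (by omega) (by omega)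
    have huab : IsUnit (((j + 1) * (p - 1 - j) : ℕ) : R) := by
      rw [Nat.cast_mul]; exact hua.mul hub
    apply IsUnit.mul_right_cancel huab
    have hsum : ((j + 1 : ℕ) : R) + ((p - 1 - j : ℕ) : R) = (p : R) := by
      rw [← Nat.cast_add]; congr 1; omega
    calc ((((j + 1 : ℕ) : R))⁻¹ + (((p - 1 - j : ℕ) : R))⁻¹) * (((j + 1) * (p - 1 - j) : ℕ) : R)
        = ((((j + 1 : ℕ) : R))⁻¹ * ((j + 1 : ℕ) : R)) * ((p - 1 - j : ℕ) : R)
          + ((((p - 1 - j : ℕ) : R))⁻¹ * ((p - 1 - j : ℕ) : R)) * ((j + 1 : ℕ) : R) := by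
          rw [Nat.cast_mul]; ring
      _ = ((p - 1 - j : ℕ) : R) + ((j + 1 : ℕ) : R) := by
          rw [ZMod.inv_mul_of_unit _ hua, ZMod.inv_mul_of_unit _ hub]; ring
      _ = (p : R) := by rw [add_comm]; exact hsum
      _ = (p : R) * ((((j + 1) * (p - 1 - j) : ℕ) : R))⁻¹ * (((j + 1) * (p - 1 - j) : ℕ) : R) := by
          rw [mul_assoc, ZMod.inv_mul_of_unit _ huab, mul_one]
  set K := ∑ j ∈ range (p - 1), ((((j + 1) * (p - 1 - j) : ℕ) : R))⁻¹ with hK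
  have h2H : 2 * H = (p : R) * K := by
    calc 2 * H = H + H := by ring
      _ = ∑ j ∈ range (p - 1), ((((j + 1 : ℕ) : R))⁻¹ + (((p - 1 - j : ℕ) : R))⁻¹) := by
          rw [Finset.sum_add_distrib, hrefl]
      _ = ∑ j ∈ range (p - 1), (p : R) * ((((j + 1) * (p - 1 - j) : ℕ) : R))⁻¹ :=
          Finset.sum_congr rfl hpair
      _ = (p : R) * K := by rw [hK, Finset.mul_sum]
  have h2H' : 2 * H = (p : R) * K * 1 := by rw [h2H, mul_one]
  -- K is in the kernel of reduction mod p
  have hK0 : (p : R) ^ 2 * K = 0 := by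
    apply ker_lemma p hp.pos
    rw [map_sum]
    have hterm : ∀ j ∈ range (p - 1),
        (ZMod.castHom (dvd_pow_self p (by norm_num : (3:ℕ) ≠ 0)) (ZMod p))
          (((((j + 1) * (p - 1 - j) : ℕ) : R))⁻¹) = -((((j + 1 : ℕ) : ZMod p)) ^ 2)⁻¹ := by
      intro j hj
      have hj' : j < p - 1 := Finset.mem_range.mp hj
      have hua : IsUnit ((j + 1 : ℕ) : R) := unit_lemma p hp 3 (j + 1) (by omega) (by omega)
      have hub : IsUnit ((p - 1 - j : ℕ) : R) := unit_lemma p hp 3 (p - 1 - j) (by omega) (by omega)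
      have huab : IsUnit (((j + 1) * (p - 1 - j) : ℕ) : R) := by
        rw [Nat.cast_mul]; exact hua.mul hub
      rw [inv_cast p (p ^ 3) _ _ huab]
      have hmap : (ZMod.castHom (dvd_pow_self p (by norm_num : (3:ℕ) ≠ 0)) (ZMod p))
          ((((j + 1) * (p - 1 - j) : ℕ) : R)) = -(((j + 1 : ℕ) : ZMod p)) ^ 2 := by
        rw [map_natCast]
        have hz : ((p - 1 - j : ℕ) : ZMod p) + ((j + 1 : ℕ) : ZMod p) = 0 := by
          rw [← Nat.cast_add, show p - 1 - j + (j + 1) = p from by omega, ZMod.natCast_self]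
        push_cast at hz ⊢
        linear_combination ((j : ZMod p) + 1) * hz
      rw [hmap, inv_neg]
    rw [Finset.sum_congr rfl hterm, Finset.sum_neg_distrib, SQ p hp hp3, neg_zero]
  have h2unit : IsUnit (2 : R) := by
    have := unit_lemma p hp 3 2 (by omega) (by omega)
    push_cast at this
    exact this
  apply h2unit.mul_left_cancel
  calc (2 : R) * ((p : R) * H) = (p : R) * (2 * H) := by ring
    _ = (p : R) * ((p : R) * K) := by rw [h2H]
    _ = (p : R) ^ 2 * K := by ring
    _ = 0 := hK0
    _ = 2 * 0 := by rw [mul_zero]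

lemma prodcastgen (p : ℕ) (R : Type) [CommRing R] :
    ∀ k, k ≤ p - 1 →
      (((p + 1).ascFactorial k : ℕ) : R) * (((p - 1).descFactorial k : ℕ) : R) =
        ∏ i ∈ range k, ((p : R) ^ 2 - ((i : R) + 1) ^ 2) := by
  intro k
  induction k with
  | zero => simp
  | succ k IH =>
    intro hk
    have hk' : k ≤ p - 1 := by omega
    have hc1 : ((p - 1 - k : ℕ) : R) = (p : R) - ((k : R) + 1) := by
      have h1 : p - 1 - k + (k + 1) = p := by omega
      have := congrArg (fun n : ℕ => (n : R)) h1
      push_cast at this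
      linear_combination this
    rw [Nat.ascFactorial_succ, Nat.descFactorial_succ, prod_range_succ]
    push_cast [hc1]
    calc ((p:R) + 1 + k) * ↑((p + 1).ascFactorial k) * (((p:R) - (k + 1)) * ↑((p - 1).descFactorial k))
        = (((p:R) + (k + 1)) * ((p:R) - ((k:R) + 1))) *
            (↑((p + 1).ascFactorial k) * ↑((p - 1).descFactorial k)) := by ring
      _ = ((p : R) ^ 2 - ((k : R) + 1) ^ 2) * ∏ i ∈ range k, ((p : R) ^ 2 - ((i : R) + 1) ^ 2) := by
            rw [IH hk']; congr 1; ring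
      _ = (∏ i ∈ range k, ((p : R) ^ 2 - ((i : R) + 1) ^ 2)) * ((p : R) ^ 2 - ((k : R) + 1) ^ 2) := by
            ring

lemma L10 (p : ℕ) (hp : p.Prime) (hp3 : 3 < p) :
    ((((p + (p - 1)).choose (p - 1) * (p - 1).choose (p - 1) : ℕ)) : ZMod (p ^ 3)) = 1 := by
  haveI : Fact p.Prime := ⟨hp⟩
  haveI : NeZero (p ^ 3) := ⟨by positivity⟩
  set R := ZMod (p ^ 3)
  have h1 := congrArg (fun n : ℕ => (n : R)) (natprod p (p - 1))
  rw [Nat.cast_mul, Nat.cast_mul, Nat.cast_mul, Nat.cast_mul] at h1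
  rw [prodcastgen p R (p - 1) le_rfl] at h1
  -- rewrite each factor
  have hfac : ∀ i ∈ range (p - 1),
      ((p : R) ^ 2 - ((i : R) + 1) ^ 2) =
        (-(((i : R) + 1) ^ 2)) * (1 - (p : R) ^ 2 * ((((i + 1 : ℕ) : R)) ^ 2)⁻¹) := by
    intro i hi
    have hi' : i < p - 1 := Finset.mem_range.mp hi
    have hu : IsUnit ((i + 1 : ℕ) : R) := unit_lemma p hp 3 (i + 1) (by omega) (by omega)
    have hu2 : IsUnit (((i + 1 : ℕ) : R) ^ 2) := hu.pow 2
    have hinv : (((i + 1 : ℕ) : R) ^ 2) * ((((i + 1 : ℕ) : R)) ^ 2)⁻¹ = 1 :=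
      ZMod.mul_inv_of_unit _ hu2
    push_cast at hinv ⊢
    linear_combination (- (p:R)^2) * hinv
  rw [Finset.prod_congr rfl hfac, Finset.prod_mul_distrib,
    prod_one_sub p hp.pos (fun i => ((((i + 1 : ℕ) : R)) ^ 2)⁻¹)] at h1
  -- kill the p^2 sum
  have hker : (p : R) ^ 2 * ∑ i ∈ range (p - 1), ((((i + 1 : ℕ) : R)) ^ 2)⁻¹ = 0 := by
    apply ker_lemma p hp.pos
    rw [map_sum]
    have hterm : ∀ i ∈ range (p - 1),
        (ZMod.castHom (dvd_pow_self p (by norm_num : (3:ℕ) ≠ 0)) (ZMod p))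
          (((((i + 1 : ℕ) : R)) ^ 2)⁻¹) = ((((i + 1 : ℕ) : ZMod p)) ^ 2)⁻¹ := by
      intro i hi
      have hi' : i < p - 1 := Finset.mem_range.mp hi
      have hu : IsUnit ((i + 1 : ℕ) : R) := unit_lemma p hp 3 (i + 1) (by omega) (by omega)
      rw [inv_cast p (p ^ 3) _ _ (hu.pow 2), map_pow, map_natCast]
    rw [Finset.sum_congr rfl hterm, SQ p hp hp3]
  rw [hker, sub_zero, mul_one] at h1
  have h2 : (∏ i ∈ range (p - 1), (-(((i : R) + 1) ^ 2))) =
      (-1) ^ (p - 1) * ((((p - 1)! : ℕ) : R) * (((p - 1)! : ℕ) : R)) := by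
    calc (∏ i ∈ range (p - 1), (-(((i : R) + 1) ^ 2)))
        = ∏ i ∈ range (p - 1), ((-1) * ((((i : R)) + 1) * (((i : R)) + 1))) :=
          prod_congr rfl (fun i _ => by ring)
      _ = (∏ _i ∈ range (p - 1), (-1 : R)) *
            ∏ i ∈ range (p - 1), ((((i : R)) + 1) * (((i : R)) + 1)) := prod_mul_distrib
      _ = (-1) ^ (p - 1) * ((∏ i ∈ range (p - 1), (((i : R)) + 1)) *
            ∏ i ∈ range (p - 1), (((i : R)) + 1)) := by
          rw [prod_const, card_range, prod_mul_distrib]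
      _ = (-1) ^ (p - 1) * ((((p - 1)! : ℕ) : R) * (((p - 1)! : ℕ) : R)) := by rw [factcast]
  have hodd : Odd p := hp.odd_of_ne_two (by omega)
  have heven : Even (p - 1) := Nat.Odd.sub_odd hodd odd_one
  rw [h2, heven.neg_one_pow, one_mul] at h1
  have hFcop : Nat.Coprime ((p - 1)!) (p ^ 3) := by
    apply Nat.Coprime.pow_right
    rcases Nat.coprime_or_dvd_of_prime hp ((p - 1)!) with h | h
    · exact h.symm
    · exfalso
      have h2 := (Nat.Prime.dvd_factorial hp).mp h
      have := hp.two_le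
      omega
  have hFunit : IsUnit ((((p - 1)! : ℕ)) : R) := (ZMod.isUnit_iff_coprime _ _).mpr hFcop
  have := (hFunit.mul hFunit).mul_left_cancel
    (show ((((p - 1)! : ℕ) : R) * (((p - 1)! : ℕ) : R)) *
        ((((p + (p - 1)).choose (p - 1) * (p - 1).choose (p - 1) : ℕ)) : R) =
      ((((p - 1)! : ℕ) : R) * (((p - 1)! : ℕ) : R)) * 1 from by
        rw [Nat.cast_mul]
        push_cast at h1 ⊢
        linear_combination h1)
  exact this

theorem stmt17 (p : ℕ) (hp : p.Prime) (hp3 : 3 < p) :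
    (∑ k ∈ Finset.range p,
        Nat.choose (p + k) (k + 1) * Nat.choose (p + k) k * (Nat.choose (p - 1) k) ^ 2) ≡
      1 [MOD 2 * p ^ 3] := by
  haveI : Fact p.Prime := ⟨hp⟩
  haveI : NeZero (p ^ 3) := ⟨by positivity⟩
  set T : ℕ → ℕ := fun k => Nat.choose (p + k) (k + 1) * Nat.choose (p + k) k * (Nat.choose (p - 1) k) ^ 2 with hT
  have hps : p = (p - 1) + 1 := by omega
  have hodd : Odd p := hp.odd_of_ne_two (by omega)
  -- Part A : mod 2
  have partA : (∑ k ∈ Finset.range p, T k) ≡ 1 [MOD 2] := by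
    have hsplit : ∑ k ∈ Finset.range p, T k =
        (∑ m ∈ Finset.range (p - 1), T (m + 1)) + T 0 := by
      rw [hps, Finset.sum_range_succ']
      norm_num
    have hdvd : (2 : ℕ) ∣ ∑ m ∈ Finset.range (p - 1), T (m + 1) := by
      apply Finset.dvd_sum
      intro m _
      have h2 := Rpar p (m + 1) hodd (by omega)
      refine dvd_trans h2 ⟨(p + (m + 1)).choose (m + 1 + 1) * (p - 1).choose (m + 1), ?_⟩
      rw [hT]
      ring
    have hT0 : T 0 = p := by simp [hT]
    calc (∑ k ∈ Finset.range p, T k) = (∑ m ∈ Finset.range (p - 1), T (m + 1)) + T 0 := hsplit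
      _ ≡ 0 + T 0 [MOD 2] := Nat.ModEq.add_right _ ((Nat.modEq_zero_iff_dvd).mpr hdvd)
      _ = p := by rw [zero_add, hT0]
      _ ≡ 1 [MOD 2] := by
          show p % 2 = 1 % 2
          have := Nat.odd_iff.mp hodd
          omega
  -- Part B : mod p^3
  have partB : (∑ k ∈ Finset.range p, T k) ≡ 1 [MOD p ^ 3] := by
    apply (ZMod.natCast_eq_natCast_iff _ _ _).mp
    set R := ZMod (p ^ 3)
    rw [Nat.cast_sum, Nat.cast_one]
    have hsplit : ∑ k ∈ Finset.range p, ((T k : ℕ) : R) =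
        (∑ k ∈ Finset.range (p - 1), ((T k : ℕ) : R)) + ((T (p - 1) : ℕ) : R) := by
      rw [show Finset.range p = Finset.range ((p - 1) + 1) from by rw [← hps], Finset.sum_range_succ]
    rw [hsplit]
    -- last term
    have hlast : ((T (p - 1) : ℕ) : R) = 1 := by
      have hsym : (p + (p - 1)).choose ((p - 1) + 1) = (p + (p - 1)).choose (p - 1) := by
        rw [show (p - 1) + 1 = (p + (p - 1)) - (p - 1) from by omega]
        exact Nat.choose_symm (by omega)
      have h10 := L10 p hp hp3
      rw [Nat.cast_mul, Nat.choose_self, Nat.cast_one, mul_one] at h10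
      rw [hT]
      simp only [hsym, Nat.choose_self]
      rw [Nat.cast_mul, Nat.cast_mul, one_pow, Nat.cast_one]
      rw [h10]
      ring
    -- middle terms
    have hmid : ∀ k ∈ Finset.range (p - 1),
        ((T k : ℕ) : R) = (p : R) * (((k + 1 : ℕ) : R))⁻¹ := by
      intro k hk
      have hk' : k < p - 1 := Finset.mem_range.mp hk
      have h4 := L4 p hp k (by omega)
      have hu : IsUnit ((k + 1 : ℕ) : R) := unit_lemma p hp 3 (k + 1) (by omega) (by omega)
      have := congrArg (fun x => (((k + 1 : ℕ) : R))⁻¹ * x) h4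
      rw [← mul_assoc, ZMod.inv_mul_of_unit _ hu, one_mul] at this
      rw [hT]
      simp only at this ⊢
      rw [this]
      ring
    rw [Finset.sum_congr rfl hmid, ← Finset.mul_sum, L9 p hp hp3, hlast, zero_add]
  -- combine
  have hcop : Nat.Coprime 2 (p ^ 3) := by
    apply Nat.Coprime.pow_right
    exact Nat.coprime_two_left.mpr hodd
  exact (Nat.modEq_and_modEq_iff_modEq_mul hcop).mp ⟨partA, partB⟩
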